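/- arXiv:1505.05455 — 4 statements merged into one kernel-verified Lean document; each statement's English description precedes it below -/
import Mathlib

section
/- Let ρ = ∑_{k=1}^m p_k ρ^a_k ⊗ ρ^b_k be a separable density matrix on ℂ^{n_a}⊗ℂ^{n_b}, where (p_k) is a probability distribution and ρ^a_k, ρ^b_k are density matrices on ℂ^{n_a}, ℂ^{n_b} respectively. Then there exists a classical state σ on (ℂ^{n_a}⊗ℂ^m)⊗(ℂ^{n_b}⊗ℂ^m) whose partial trace over the two ℂ^m factors equals ρ; explicitly, σ = ∑_{k=1}^m p_k (ρ^a_k ⊗ |k⟩⟨k|) ⊗ (ρ^b_k ⊗ |k⟩⟨k|) is such a classical extension, where {|k⟩} is the standard basis of ℂ^m. -/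
open Matrix Kronecker BigOperators ComplexOrder

/-- A density matrix: positive semidefinite with trace 1. -/
def IsDensityMatrix {n : Type*} [Fintype n] (ρ : Matrix n n ℂ) : Prop :=
  ρ.PosSemidef ∧ ρ.trace = 1

/-- A classical (classically correlated) state on `ℂ^{n_A} ⊗ ℂ^{n_B}`:
    `σ = ∑_{i,j} p_{ij} |α_i⟩⟨α_i| ⊗ |β_j⟩⟨β_j|` for orthonormal bases `{α_i}`, `{β_j}`
    and a probability distribution `(p_{ij})`. -/
def IsClassicalState {nA nB : Type*} [Fintype nA] [Fintype nB] [DecidableEq nA] [DecidableEq nB]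
    (σ : Matrix (nA × nB) (nA × nB) ℂ) : Prop :=
  ∃ (α : nA → nA → ℂ) (β : nB → nB → ℂ) (p : nA → nB → ℝ),
    (∀ i j, star (α i) ⬝ᵥ α j = if i = j then (1 : ℂ) else 0) ∧
    (∀ i j, star (β i) ⬝ᵥ β j = if i = j then (1 : ℂ) else 0) ∧
    (∀ i j, 0 ≤ p i j) ∧ (∑ i, ∑ j, p i j = 1) ∧
    σ = ∑ i, ∑ j, (p i j : ℂ) •
        (vecMulVec (α i) (star (α i)) ⊗ₖ vecMulVec (β j) (star (β j)))

/-- Partial trace over the second and fourth tensor factors of a matrix on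
    `(ℂ^a ⊗ ℂ^b) ⊗ (ℂ^c ⊗ ℂ^d)`, tracing out the `b` and `d` factors. -/
noncomputable def trOutAncillas {a b c d : Type*} [Fintype b] [Fintype d]
    (X : Matrix ((a × b) × (c × d)) ((a × b) × (c × d)) ℂ) :
    Matrix (a × c) (a × c) ℂ :=
  fun p q => ∑ k : b, ∑ l : d, X ((p.1, k), (p.2, l)) ((q.1, k), (q.2, l))

section helperLemmas

set_option linter.unusedSectionVars false

lemma spectral_decomp {n : ℕ} {A : Matrix (Fin n) (Fin n) ℂ} (hA : A.PosSemidef) :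
    ∃ (v : Fin n → Fin n → ℂ) (lam : Fin n → ℝ),
      (∀ i j, star (v i) ⬝ᵥ v j = if i = j then (1:ℂ) else 0) ∧
      (∀ i, 0 ≤ lam i) ∧ ((∑ i, lam i : ℝ) : ℂ) = A.trace ∧
      A = ∑ i, (lam i : ℂ) • vecMulVec (v i) (star (v i)) := by
  have hH := hA.1
  set U : Matrix (Fin n) (Fin n) ℂ := (hH.eigenvectorUnitary : Matrix (Fin n) (Fin n) ℂ) with hU
  set v : Fin n → Fin n → ℂ := fun i => fun p => U p i with hv
  set lam := hH.eigenvalues with hlam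
  have horth : ∀ i j, star (v i) ⬝ᵥ v j = if i = j then (1:ℂ) else 0 := by
    intro i j
    have h1 : star U * U = 1 := Matrix.mem_unitaryGroup_iff'.mp hH.eigenvectorUnitary.2
    have := congrFun (congrFun h1 i) j
    simpa [Matrix.mul_apply, dotProduct, Matrix.star_apply, Matrix.one_apply,
      mul_comm] using this
  have hspec : A = ∑ i, (lam i : ℂ) • vecMulVec (v i) (star (v i)) := by
    ext p q
    rw [show A = U * diagonal (RCLike.ofReal ∘ lam) * star U from hH.spectral_theorem]
    simp only [Matrix.mul_apply, Matrix.diagonal_apply, Matrix.star_apply,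
      Matrix.sum_apply, Matrix.smul_apply, Matrix.vecMulVec_apply, Pi.star_apply,
      Function.comp_apply, smul_eq_mul, Finset.sum_ite_eq, Finset.mem_univ, if_true,
      ite_mul, zero_mul, mul_ite, mul_zero]
    apply Finset.sum_congr rfl
    intro i _
    simp only [Finset.sum_ite_eq', Finset.mem_univ, if_true]
    rw [mul_right_comm]
    exact mul_comm _ _
  refine ⟨v, lam, horth, hA.eigenvalues_nonneg, ?_, hspec⟩
  · rw [hspec]
    simp only [Matrix.trace, Matrix.diag_apply, Matrix.sum_apply, Matrix.smul_apply,
      Matrix.vecMulVec_apply, Pi.star_apply, smul_eq_mul]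
    rw [Finset.sum_comm]
    push_cast
    apply Finset.sum_congr rfl
    intro i _
    have h := horth i i
    simp only [dotProduct, Pi.star_apply, eq_self_iff_true, if_true] at h
    rw [← Finset.mul_sum,
      show ∑ p, v i p * star (v i p) = 1 from by
        rw [← h]; exact Finset.sum_congr rfl fun p _ => by ring]
    ring


variable {l m n p : Type*} [Fintype l] [Fintype m] [Fintype n] [Fintype p]

lemma sum_kronecker_left {ι : Type*} (s : Finset ι) (A : ι → Matrix l m ℂ) (B : Matrix n p ℂ) :
    (∑ i ∈ s, A i) ⊗ₖ B = ∑ i ∈ s, A i ⊗ₖ B := by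
  ext ⟨a,b⟩ ⟨c,d⟩
  simp [kroneckerMap_apply, Matrix.sum_apply, Finset.sum_mul]

lemma sum_kronecker_right {ι : Type*} (s : Finset ι) (A : Matrix l m ℂ) (B : ι → Matrix n p ℂ) :
    A ⊗ₖ (∑ i ∈ s, B i) = ∑ i ∈ s, A ⊗ₖ B i := by
  ext ⟨a,b⟩ ⟨c,d⟩
  simp [kroneckerMap_apply, Matrix.sum_apply, Finset.mul_sum]

/-- tensor of a vector with a standard basis vector -/
def tv {n : ℕ} {m : ℕ} (v : Fin n → ℂ) (k : Fin m) : Fin n × Fin m → ℂ :=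
  fun pl => v pl.1 * (if pl.2 = k then 1 else 0)

lemma tv_vecMulVec {n m : ℕ} (v : Fin n → ℂ) (k : Fin m) :
    vecMulVec (tv v k) (star (tv v k)) =
      vecMulVec v (star v) ⊗ₖ Matrix.single k k (1 : ℂ) := by
  ext ⟨a,s⟩ ⟨c,t⟩
  have hstd : ∀ (s t : Fin m), Matrix.single k k (1:ℂ) s t
      = if s = k ∧ t = k then 1 else 0 := by
    intro s t
    simp only [Matrix.single, Matrix.of_apply]
    by_cases hs : s = k <;> by_cases ht : t = k <;> simp_all <;> tauto
  simp only [vecMulVec_apply, Pi.star_apply, tv, kroneckerMap_apply, hstd]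
  by_cases hs : s = k <;> by_cases ht : t = k <;> simp [hs, ht] <;> ring

lemma tv_dot {n m : ℕ} (v w : Fin n → ℂ) (k l : Fin m) :
    star (tv v k) ⬝ᵥ tv w l = (star v ⬝ᵥ w) * (if k = l then 1 else 0) := by
  simp only [dotProduct, Pi.star_apply, tv]
  rw [← Finset.univ_product_univ, Finset.sum_product]
  by_cases hkl : k = l
  · subst hkl
    simp only [eq_self_iff_true, if_true, if_pos trivial, mul_one]
    apply Finset.sum_congr rfl
    intro i _
    have h : ∀ s : Fin m, star (v i * (if s = k then (1:ℂ) else 0)) *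
        (w i * (if s = k then 1 else 0)) = if s = k then star (v i) * w i else 0 := by
      intro s; by_cases h : s = k <;> simp [h]
    simp_rw [h]
    simp [Finset.sum_ite_eq']
  · simp only [hkl, if_false, mul_zero]
    apply Finset.sum_eq_zero
    intro i _
    apply Finset.sum_eq_zero
    intro s _
    by_cases hs : s = k <;> by_cases hl : s = l <;> simp_all

end helperLemmas

/-- Every separable density matrix
    `ρ = ∑_{k=1}^m p_k ρ^a_k ⊗ ρ^b_k` on `ℂ^{n_a} ⊗ ℂ^{n_b}` admits a classical
    extension: the state `σ = ∑_k p_k (ρ^a_k ⊗ |k⟩⟨k|) ⊗ (ρ^b_k ⊗ |k⟩⟨k|)` on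
    `(ℂ^{n_a} ⊗ ℂ^m) ⊗ (ℂ^{n_b} ⊗ ℂ^m)` is a classical state whose partial trace over
    the two `ℂ^m` factors equals `ρ`. -/
theorem separable_has_classical_extension
    (na nb m : ℕ)
    (p : Fin m → ℝ)
    (hp0 : ∀ k, 0 ≤ p k) (hp1 : ∑ k, p k = 1)
    (ρa : Fin m → Matrix (Fin na) (Fin na) ℂ)
    (ρb : Fin m → Matrix (Fin nb) (Fin nb) ℂ)
    (hρa : ∀ k, IsDensityMatrix (ρa k))
    (hρb : ∀ k, IsDensityMatrix (ρb k))
    (ρ : Matrix (Fin na × Fin nb) (Fin na × Fin nb) ℂ)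
    (hρ : ρ = ∑ k, (p k : ℂ) • (ρa k ⊗ₖ ρb k)) :
    (∃ σ : Matrix ((Fin na × Fin m) × (Fin nb × Fin m))
               ((Fin na × Fin m) × (Fin nb × Fin m)) ℂ,
        IsClassicalState σ ∧ trOutAncillas σ = ρ) ∧
    IsClassicalState
      (∑ k, (p k : ℂ) •
        ((ρa k ⊗ₖ Matrix.single k k (1 : ℂ)) ⊗ₖ
         (ρb k ⊗ₖ Matrix.single k k (1 : ℂ)))) ∧
    trOutAncillas
      (∑ k, (p k : ℂ) •
        ((ρa k ⊗ₖ Matrix.single k k (1 : ℂ)) ⊗ₖ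
         (ρb k ⊗ₖ Matrix.single k k (1 : ℂ)))) = ρ := by
  classical
  set σ : Matrix ((Fin na × Fin m) × (Fin nb × Fin m))
      ((Fin na × Fin m) × (Fin nb × Fin m)) ℂ :=
    ∑ k, (p k : ℂ) •
        ((ρa k ⊗ₖ Matrix.single k k (1 : ℂ)) ⊗ₖ
         (ρb k ⊗ₖ Matrix.single k k (1 : ℂ))) with hσ
  -- spectral decompositions
  choose va lama horta h0a hta hsa using fun k => spectral_decomp (hρa k).1
  choose vb lamb hortb h0b htb hsb using fun k => spectral_decomp (hρb k).1
  have hta1 : ∀ k, ∑ i, lama k i = 1 := by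
    intro k
    have := hta k
    rw [(hρa k).2] at this
    exact_mod_cast this
  have htb1 : ∀ k, ∑ j, lamb k j = 1 := by
    intro k
    have := htb k
    rw [(hρb k).2] at this
    exact_mod_cast this
  -- the classical-state data
  set α : (Fin na × Fin m) → (Fin na × Fin m) → ℂ := fun ik => tv (va ik.2 ik.1) ik.2 with hα
  set β : (Fin nb × Fin m) → (Fin nb × Fin m) → ℂ := fun jl => tv (vb jl.2 jl.1) jl.2 with hβ
  set q : (Fin na × Fin m) → (Fin nb × Fin m) → ℝ :=
    fun ik jl => if ik.2 = jl.2 then p ik.2 * lama ik.2 ik.1 * lamb ik.2 jl.1 else 0 with hq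
  have hortα : ∀ i j, star (α i) ⬝ᵥ α j = if i = j then (1:ℂ) else 0 := by
    rintro ⟨i, k⟩ ⟨j, l⟩
    rw [hα]
    dsimp only
    rw [tv_dot]
    by_cases hkl : k = l
    · subst hkl
      rw [horta k i j]
      by_cases hij : i = j <;> simp [hij, Prod.ext_iff]
    · simp [hkl, Prod.ext_iff]
  have hortβ : ∀ i j, star (β i) ⬝ᵥ β j = if i = j then (1:ℂ) else 0 := by
    rintro ⟨i, k⟩ ⟨j, l⟩
    rw [hβ]
    dsimp only
    rw [tv_dot]
    by_cases hkl : k = l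
    · subst hkl
      rw [hortb k i j]
      by_cases hij : i = j <;> simp [hij, Prod.ext_iff]
    · simp [hkl, Prod.ext_iff]
  have hq0 : ∀ i j, 0 ≤ q i j := by
    rintro ⟨i, k⟩ ⟨j, l⟩
    rw [hq]
    dsimp only
    split_ifs
    · exact mul_nonneg (mul_nonneg (hp0 k) (h0a k i)) (h0b k j)
    · exact le_rfl
  have hq1 : ∑ i, ∑ j, q i j = 1 := by
    rw [hq]
    rw [Fintype.sum_prod_type]
    simp_rw [Fintype.sum_prod_type]
    simp only [Finset.sum_ite_eq, Finset.mem_univ, if_true]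
    simp_rw [← Finset.mul_sum, htb1, mul_one]
    rw [Finset.sum_comm]
    simp_rw [← Finset.mul_sum, hta1, mul_one]
    exact hp1
  have hT : σ = ∑ k, ∑ i, ∑ j,
      ((p k : ℂ) * ((lama k i : ℂ) * (lamb k j : ℂ))) •
      ((vecMulVec (va k i) (star (va k i)) ⊗ₖ Matrix.single k k (1:ℂ)) ⊗ₖ
       (vecMulVec (vb k j) (star (vb k j)) ⊗ₖ Matrix.single k k (1:ℂ))) := by
    rw [hσ]
    apply Finset.sum_congr rfl
    intro k _
    rw [hsa k, hsb k]
    simp_rw [sum_kronecker_left, smul_kronecker, sum_kronecker_right, kronecker_smul,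
      Finset.smul_sum, smul_smul]
  have hσeq : σ = ∑ i, ∑ j, (q i j : ℂ) •
      (vecMulVec (α i) (star (α i)) ⊗ₖ vecMulVec (β j) (star (β j))) := by
    rw [hT, hα, hβ, hq]
    rw [Fintype.sum_prod_type]
    simp_rw [Fintype.sum_prod_type]
    simp_rw [tv_vecMulVec]
    simp_rw [apply_ite (Complex.ofReal), Complex.ofReal_zero, Complex.ofReal_mul,
      ite_smul, zero_smul, Finset.sum_ite_eq, Finset.mem_univ, if_true]
    rw [Finset.sum_comm]
    apply Finset.sum_congr rfl
    intro k _
    apply Finset.sum_congr rfl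
    intro i _
    apply Finset.sum_congr rfl
    intro j _
    rw [mul_assoc]
  have htr : trOutAncillas σ = ρ := by
    rw [hσ, hρ]
    funext x y
    show (∑ s, ∑ t, _) = _
    simp only [Matrix.sum_apply, Matrix.smul_apply, kroneckerMap_apply, smul_eq_mul,
      Matrix.single, Matrix.of_apply, and_self, mul_ite, mul_one, mul_zero]
    rw [Finset.sum_comm]
    simp [Finset.sum_ite_eq', Finset.sum_ite_eq, mul_ite, ite_mul, zero_mul, mul_zero]
  exact ⟨⟨σ, ⟨α, β, q, hortα, hortβ, hq0, hq1, hσeq⟩, htr⟩,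
    ⟨α, β, q, hortα, hortβ, hq0, hq1, hσeq⟩, htr⟩
end

section
/- Let σ be a density matrix on ℂ^{d₁}⊗ℂ^{d₂}, let ρ₁ be its partial trace over the second factor and ρ₂ its partial trace over the first factor. Then W(σ) ≥ W(ρ₁) + W(ρ₂), i.e. log₂(d₁d₂) − S(σ) ≥ (log₂ d₁ − S(ρ₁)) + (log₂ d₂ − S(ρ₂)); equivalently, the accessible information i(τ) = log₂ d − S(τ) satisfies the hybrid monogamy relation i(σ) ≥ i(ρ₁) + i(ρ₂). -/
open Matrix BigOperators ComplexOrder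

/-- The von Neumann entropy (in bits) of a matrix: `S(ρ) = −∑ᵢ λᵢ log₂ λᵢ` where
    `(λᵢ)` are the eigenvalues (with multiplicity) of the Hermitian matrix `ρ`,
    with the convention `0·log₂ 0 = 0` (guaranteed by `Real.logb 2 0 = 0`). -/
noncomputable def vnEntropy {n : Type*} [Fintype n] [DecidableEq n]
    (ρ : Matrix n n ℂ) : ℝ :=
  if h : ρ.IsHermitian then -∑ i, h.eigenvalues i * Real.logb 2 (h.eigenvalues i) else 0

/-- Partial trace over the second tensor factor. -/
noncomputable def trSecond {m n : Type*} [Fintype n]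
    (X : Matrix (m × n) (m × n) ℂ) : Matrix m m ℂ :=
  fun i j => ∑ k : n, X (i, k) (j, k)

/-- Partial trace over the first tensor factor. -/
noncomputable def trFirst {m n : Type*} [Fintype m]
    (X : Matrix (m × n) (m × n) ℂ) : Matrix n n ℂ :=
  fun i j => ∑ k : m, X (k, i) (k, j)


open Finset Kronecker Real

lemma jensen_ds {ι κ : Type*} [Fintype ι] [Fintype κ]
    (D : κ → ι → ℝ) (lam : ι → ℝ)
    (hD : ∀ m a, 0 ≤ D m a) (hrow : ∀ m, ∑ a, D m a = 1)
    (hcol : ∀ a, ∑ m, D m a = 1) (hlam : ∀ a, 0 ≤ lam a) :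
    ∑ a, Real.negMulLog (lam a) ≤ ∑ m, Real.negMulLog (∑ a, D m a * lam a) := by
  have key : ∀ m, ∑ a, D m a * Real.negMulLog (lam a)
      ≤ Real.negMulLog (∑ a, D m a * lam a) := by
    intro m
    have := Real.concaveOn_negMulLog.le_map_sum (t := Finset.univ)
      (fun a _ => hD m a) (hrow m) (fun a _ => Set.mem_Ici.mpr (hlam a))
    simpa [smul_eq_mul] using this
  calc ∑ a, Real.negMulLog (lam a)
      = ∑ a, (∑ m, D m a) * Real.negMulLog (lam a) := by
        simp [hcol]
    _ = ∑ m, ∑ a, D m a * Real.negMulLog (lam a) := by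
        rw [Finset.sum_comm]
        simp [Finset.sum_mul]
    _ ≤ ∑ m, Real.negMulLog (∑ a, D m a * lam a) :=
        Finset.sum_le_sum fun m _ => key m

lemma gibbs {ι : Type*} [Fintype ι] (μ ν : ι → ℝ)
    (hμ : ∀ i, 0 ≤ μ i) (hν : ∀ i, 0 ≤ ν i)
    (hsum : ∑ i, μ i = ∑ i, ν i) (hz : ∀ i, ν i = 0 → μ i = 0) :
    ∑ i, Real.negMulLog (μ i) ≤ ∑ i, -(μ i * Real.log (ν i)) := by
  have key : ∀ i, μ i * Real.log (ν i) - μ i * Real.log (μ i) ≤ ν i - μ i := by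
    intro i
    rcases eq_or_lt_of_le (hμ i) with h | h
    · have hν' := hν i
      rw [show μ i = 0 from h.symm]
      simpa using hν'
    · have hνpos : 0 < ν i := by
        rcases eq_or_lt_of_le (hν i) with h' | h'
        · exact absurd (hz i h'.symm) (by positivity)
        · exact h'
      have hlog : Real.log (ν i / μ i) ≤ ν i / μ i - 1 :=
        Real.log_le_sub_one_of_pos (by positivity)
      have := mul_le_mul_of_nonneg_left hlog (le_of_lt h)
      rw [Real.log_div (ne_of_gt hνpos) (ne_of_gt h)] at this
      calc μ i * Real.log (ν i) - μ i * Real.log (μ i)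
          = μ i * (Real.log (ν i) - Real.log (μ i)) := by ring
        _ ≤ μ i * (ν i / μ i - 1) := this
        _ = ν i - μ i := by field_simp
  have h2 : ∑ i, (μ i * Real.log (ν i) - μ i * Real.log (μ i)) ≤ 0 := by
    calc ∑ i, (μ i * Real.log (ν i) - μ i * Real.log (μ i))
        ≤ ∑ i, (ν i - μ i) := Finset.sum_le_sum fun i _ => key i
      _ = 0 := by rw [Finset.sum_sub_distrib, hsum]; ring
  rw [Finset.sum_sub_distrib] at h2
  have e1 : ∑ i, Real.negMulLog (μ i) = -∑ i, μ i * Real.log (μ i) := by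
    simp [Real.negMulLog_eq_neg]
  have e2 : ∑ i, -(μ i * Real.log (ν i)) = -∑ i, μ i * Real.log (ν i) := by
    simp
  linarith

lemma classical_subadd {ι κ : Type*} [Fintype ι] [Fintype κ]
    (μ : ι × κ → ℝ) (hμ : ∀ x, 0 ≤ μ x) (htot : ∑ x, μ x = 1) :
    ∑ x, Real.negMulLog (μ x) ≤
      ∑ i, Real.negMulLog (∑ k, μ (i, k)) + ∑ k, Real.negMulLog (∑ i, μ (i, k)) := by
  set p : ι → ℝ := fun i => ∑ k, μ (i, k) with hp
  set q : κ → ℝ := fun k => ∑ i, μ (i, k) with hq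
  have hpn : ∀ i, 0 ≤ p i := fun i => Finset.sum_nonneg fun k _ => hμ _
  have hqn : ∀ k, 0 ≤ q k := fun k => Finset.sum_nonneg fun i _ => hμ _
  have hptot : ∑ i, p i = 1 := by
    rw [hp, ← Fintype.sum_prod_type]; exact htot
  have hqtot : ∑ k, q k = 1 := by
    rw [hq]; rw [Finset.sum_comm, ← Fintype.sum_prod_type]; exact htot
  have hμle_p : ∀ i k, μ (i, k) ≤ p i := fun i k =>
    Finset.single_le_sum (fun k' _ => hμ (i, k')) (Finset.mem_univ k)
  have hμle_q : ∀ i k, μ (i, k) ≤ q k := fun i k =>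
    Finset.single_le_sum (fun i' _ => hμ (i', k)) (Finset.mem_univ i)
  have hgibbs := gibbs μ (fun x => p x.1 * q x.2)
    hμ (fun x => mul_nonneg (hpn _) (hqn _))
    (by rw [htot, Fintype.sum_prod_type]
        simp only [← Finset.sum_mul, ← Finset.mul_sum]
        rw [hptot, hqtot, one_mul])
    (by intro x hx
        rcases mul_eq_zero.mp hx with h | h
        · exact le_antisymm (h ▸ hμle_p x.1 x.2) (hμ x)
        · exact le_antisymm (h ▸ hμle_q x.1 x.2) (hμ x))
  refine hgibbs.trans (le_of_eq ?_)
  have step : ∀ x : ι × κ, -(μ x * Real.log (p x.1 * q x.2)) =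
      -(μ x * Real.log (p x.1)) + -(μ x * Real.log (q x.2)) := by
    intro x
    rcases eq_or_lt_of_le (hμ x) with h | h
    · rw [← h]; ring
    · have hp' : 0 < p x.1 := lt_of_lt_of_le h (hμle_p x.1 x.2)
      have hq' : 0 < q x.2 := lt_of_lt_of_le h (hμle_q x.1 x.2)
      rw [Real.log_mul (ne_of_gt hp') (ne_of_gt hq')]; ring
  rw [Finset.sum_congr rfl fun x _ => step x, Finset.sum_add_distrib]
  congr 1
  · rw [Fintype.sum_prod_type]
    refine Finset.sum_congr rfl fun i _ => ?_
    simp [← Finset.sum_mul, Real.negMulLog_eq_neg, hp]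
  · rw [Fintype.sum_prod_type, Finset.sum_comm]
    refine Finset.sum_congr rfl fun k _ => ?_
    simp [← Finset.sum_mul, Real.negMulLog_eq_neg, hq]

lemma trSecond_posSemidef {m n : Type*} [Fintype m] [Fintype n] [DecidableEq m] [DecidableEq n]
    {X : Matrix (m × n) (m × n) ℂ} (hX : X.PosSemidef) : (trSecond X).PosSemidef := by
  obtain ⟨B, rfl⟩ : ∃ B : Matrix (m × n) (m × n) ℂ, X = Bᴴ * B := by
    open MatrixOrder in exact CStarAlgebra.nonneg_iff_eq_star_mul_self.mp hX.nonneg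
  have : trSecond (Bᴴ * B) =
      (Matrix.of (fun (mk : (m × n) × n) (i : m) => B mk.1 (i, mk.2)))ᴴ *
      (Matrix.of (fun (mk : (m × n) × n) (i : m) => B mk.1 (i, mk.2))) := by
    ext i j
    simp only [trSecond, Matrix.mul_apply, Matrix.conjTranspose_apply, Matrix.of_apply]
    rw [Fintype.sum_prod_type]
    exact Finset.sum_comm
  rw [this]
  exact Matrix.posSemidef_conjTranspose_mul_self _

lemma trFirst_posSemidef {m n : Type*} [Fintype m] [Fintype n] [DecidableEq m] [DecidableEq n]
    {X : Matrix (m × n) (m × n) ℂ} (hX : X.PosSemidef) : (trFirst X).PosSemidef := by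
  obtain ⟨B, rfl⟩ : ∃ B : Matrix (m × n) (m × n) ℂ, X = Bᴴ * B := by
    open MatrixOrder in exact CStarAlgebra.nonneg_iff_eq_star_mul_self.mp hX.nonneg
  have : trFirst (Bᴴ * B) =
      (Matrix.of (fun (mk : (m × n) × m) (i : n) => B mk.1 (mk.2, i)))ᴴ *
      (Matrix.of (fun (mk : (m × n) × m) (i : n) => B mk.1 (mk.2, i))) := by
    ext i j
    simp only [trFirst, Matrix.mul_apply, Matrix.conjTranspose_apply, Matrix.of_apply]
    rw [Fintype.sum_prod_type]
    exact Finset.sum_comm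
  rw [this]
  exact Matrix.posSemidef_conjTranspose_mul_self _

lemma trSecond_trace {m n : Type*} [Fintype m] [Fintype n]
    (X : Matrix (m × n) (m × n) ℂ) : (trSecond X).trace = X.trace := by
  simp [Matrix.trace, trSecond, Matrix.diag, Fintype.sum_prod_type]

lemma trFirst_trace {m n : Type*} [Fintype m] [Fintype n]
    (X : Matrix (m × n) (m × n) ℂ) : (trFirst X).trace = X.trace := by
  rw [Matrix.trace]
  simp only [Matrix.trace, trFirst, Matrix.diag, Fintype.sum_prod_type]
  exact Finset.sum_comm

open Kronecker

lemma kron_conjTranspose {m n p q : Type*} (V : Matrix m n ℂ) (W : Matrix p q ℂ) :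
    (V ⊗ₖ W)ᴴ = Vᴴ ⊗ₖ Wᴴ := by
  ext ⟨a, b⟩ ⟨c, d⟩
  simp [Matrix.conjTranspose_apply, Matrix.kroneckerMap_apply, star_mul', mul_comm]

lemma trace_mul_std {m : Type*} [Fintype m] [DecidableEq m]
    (P : Matrix m m ℂ) (i j : m) :
    (P * Matrix.single j i 1).trace = P i j := by
  simp [Matrix.trace, Matrix.diag, Matrix.mul_apply, Matrix.single, Matrix.of_apply,
    ite_and, Finset.sum_ite_eq, Finset.sum_ite_eq']

lemma trace_kron_second {m n : Type*} [Fintype m] [Fintype n] [DecidableEq m] [DecidableEq n]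
    (X : Matrix (m × n) (m × n) ℂ) (A : Matrix m m ℂ) :
    (X * (A ⊗ₖ (1 : Matrix n n ℂ))).trace = (trSecond X * A).trace := by
  simp only [Matrix.trace, Matrix.diag, Matrix.mul_apply, trSecond, Matrix.kroneckerMap_apply,
    Fintype.sum_prod_type, Matrix.one_apply, mul_ite, mul_one, mul_zero, Finset.sum_ite_eq',
    Finset.mem_univ, if_true, Finset.sum_mul]
  refine Finset.sum_congr rfl fun i _ => ?_
  exact Finset.sum_comm

lemma trace_kron_first {m n : Type*} [Fintype m] [Fintype n] [DecidableEq m] [DecidableEq n]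
    (X : Matrix (m × n) (m × n) ℂ) (B : Matrix n n ℂ) :
    (X * ((1 : Matrix m m ℂ) ⊗ₖ B)).trace = (trFirst X * B).trace := by
  simp only [Matrix.trace, Matrix.diag, Matrix.mul_apply, trFirst, Matrix.kroneckerMap_apply,
    Fintype.sum_prod_type, Matrix.one_apply, ite_mul, one_mul, zero_mul, mul_ite, mul_zero,
    Finset.sum_mul]
  have inner : ∀ (i : m) (k : n),
      (∑ i' : m, ∑ k' : n, if i' = i then X (i,k) (i',k') * B k' k else 0)
      = ∑ k' : n, X (i,k) (i,k') * B k' k := by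
    intro i k
    rw [Finset.sum_comm]
    simp
  calc (∑ i, ∑ k, ∑ i' : m, ∑ k' : n, if i' = i then X (i,k) (i',k') * B k' k else 0)
      = ∑ i, ∑ k, ∑ k' : n, X (i,k) (i,k') * B k' k :=
        Finset.sum_congr rfl fun i _ => Finset.sum_congr rfl fun k _ => inner i k
    _ = ∑ k, ∑ i, ∑ k' : n, X (i,k) (i,k') * B k' k := Finset.sum_comm
    _ = ∑ k, ∑ k' : n, ∑ i, X (i,k) (i,k') * B k' k :=
        Finset.sum_congr rfl fun k _ => Finset.sum_comm

lemma trSecond_conj {m n : Type*} [Fintype m] [Fintype n] [DecidableEq m] [DecidableEq n]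
    (V : Matrix m m ℂ) (W : Matrix n n ℂ) (hW : W * Wᴴ = 1)
    (X : Matrix (m × n) (m × n) ℂ) :
    trSecond ((V ⊗ₖ W)ᴴ * X * (V ⊗ₖ W)) = Vᴴ * trSecond X * V := by
  ext i j
  rw [← trace_mul_std (trSecond ((V ⊗ₖ W)ᴴ * X * (V ⊗ₖ W))) i j,
      ← trace_mul_std (Vᴴ * trSecond X * V) i j]
  set A := Matrix.single j i (1 : ℂ) with hA
  set Y := V ⊗ₖ W with hY
  have hYconj : Y * (A ⊗ₖ (1 : Matrix n n ℂ)) * Yᴴ = (V * A * Vᴴ) ⊗ₖ (1 : Matrix n n ℂ) := by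
    rw [hY, kron_conjTranspose, ← Matrix.mul_kronecker_mul, ← Matrix.mul_kronecker_mul, mul_one, hW]
  calc (trSecond (Yᴴ * X * Y) * A).trace
      = ((Yᴴ * X * Y) * (A ⊗ₖ (1 : Matrix n n ℂ))).trace := (trace_kron_second _ _).symm
    _ = (X * (Y * (A ⊗ₖ (1 : Matrix n n ℂ)) * Yᴴ)).trace := by
        rw [show Yᴴ * X * Y * (A ⊗ₖ (1 : Matrix n n ℂ))
              = Yᴴ * (X * (Y * (A ⊗ₖ (1 : Matrix n n ℂ)))) from by simp only [mul_assoc],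
           Matrix.trace_mul_comm,
           show X * (Y * (A ⊗ₖ (1 : Matrix n n ℂ))) * Yᴴ
              = X * (Y * (A ⊗ₖ (1 : Matrix n n ℂ)) * Yᴴ) from by simp only [mul_assoc]]
    _ = (X * ((V * A * Vᴴ) ⊗ₖ (1 : Matrix n n ℂ))).trace := by rw [hYconj]
    _ = (trSecond X * (V * A * Vᴴ)).trace := trace_kron_second _ _
    _ = ((Vᴴ * trSecond X * V) * A).trace := by
        rw [show trSecond X * (V * A * Vᴴ) = (trSecond X * V * A) * Vᴴ from by
              simp only [mul_assoc],
           Matrix.trace_mul_comm,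
           show Vᴴ * (trSecond X * V * A) = (Vᴴ * trSecond X * V) * A from by
              simp only [mul_assoc]]

lemma trFirst_conj {m n : Type*} [Fintype m] [Fintype n] [DecidableEq m] [DecidableEq n]
    (V : Matrix m m ℂ) (W : Matrix n n ℂ) (hV : V * Vᴴ = 1)
    (X : Matrix (m × n) (m × n) ℂ) :
    trFirst ((V ⊗ₖ W)ᴴ * X * (V ⊗ₖ W)) = Wᴴ * trFirst X * W := by
  ext i j
  rw [← trace_mul_std (trFirst ((V ⊗ₖ W)ᴴ * X * (V ⊗ₖ W))) i j,
      ← trace_mul_std (Wᴴ * trFirst X * W) i j]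
  set A := Matrix.single j i (1 : ℂ) with hA
  set Y := V ⊗ₖ W with hY
  have hYconj : Y * ((1 : Matrix m m ℂ) ⊗ₖ A) * Yᴴ = (1 : Matrix m m ℂ) ⊗ₖ (W * A * Wᴴ) := by
    rw [hY, kron_conjTranspose, ← Matrix.mul_kronecker_mul, ← Matrix.mul_kronecker_mul,
      mul_one, hV]
  calc (trFirst (Yᴴ * X * Y) * A).trace
      = ((Yᴴ * X * Y) * ((1 : Matrix m m ℂ) ⊗ₖ A)).trace := (trace_kron_first _ _).symm
    _ = (X * (Y * ((1 : Matrix m m ℂ) ⊗ₖ A) * Yᴴ)).trace := by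
        rw [show Yᴴ * X * Y * ((1 : Matrix m m ℂ) ⊗ₖ A)
              = Yᴴ * (X * (Y * ((1 : Matrix m m ℂ) ⊗ₖ A))) from by simp only [mul_assoc],
           Matrix.trace_mul_comm,
           show X * (Y * ((1 : Matrix m m ℂ) ⊗ₖ A)) * Yᴴ
              = X * (Y * ((1 : Matrix m m ℂ) ⊗ₖ A) * Yᴴ) from by simp only [mul_assoc]]
    _ = (X * ((1 : Matrix m m ℂ) ⊗ₖ (W * A * Wᴴ))).trace := by rw [hYconj]
    _ = (trFirst X * (W * A * Wᴴ)).trace := trace_kron_first _ _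
    _ = ((Wᴴ * trFirst X * W) * A).trace := by
        rw [show trFirst X * (W * A * Wᴴ) = (trFirst X * W * A) * Wᴴ from by
              simp only [mul_assoc],
           Matrix.trace_mul_comm,
           show Wᴴ * (trFirst X * W * A) = (Wᴴ * trFirst X * W) * A from by
              simp only [mul_assoc]]

-- helper: vnEntropy in natural-log form
lemma vnEntropy_eq {n : Type*} [Fintype n] [DecidableEq n]
    {ρ : Matrix n n ℂ} (h : ρ.IsHermitian) :
    vnEntropy ρ = (∑ i, Real.negMulLog (h.eigenvalues i)) / Real.log 2 := by
  rw [vnEntropy, dif_pos h, Finset.sum_div, ← Finset.sum_neg_distrib]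
  refine Finset.sum_congr rfl fun i _ => ?_
  rw [Real.negMulLog, ← Real.log_div_log]
  ring

-- helper: sum of eigenvalues equals real part of trace (trace is real & equals it)
lemma sum_eigenvalues_eq {n : Type*} [Fintype n] [DecidableEq n]
    {ρ : Matrix n n ℂ} (h : ρ.IsHermitian) :
    (↑(∑ i, h.eigenvalues i) : ℂ) = ρ.trace := by
  have hst := h.conjStarAlgAut_star_eigenvectorUnitary
  rw [Unitary.conjStarAlgAut_star_apply] at hst
  have h2 : (Matrix.diagonal (RCLike.ofReal ∘ h.eigenvalues)).trace
      = ρ.trace := by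
    rw [← hst, Matrix.star_eq_conjTranspose, Matrix.trace_mul_cycle]
    rw [show (Matrix.IsHermitian.eigenvectorUnitary h : Matrix n n ℂ) *
        (Matrix.IsHermitian.eigenvectorUnitary h : Matrix n n ℂ)ᴴ * ρ = ρ by
      rw [← Matrix.star_eq_conjTranspose,
        (Matrix.mem_unitaryGroup_iff).mp (Matrix.IsHermitian.eigenvectorUnitary h).2, one_mul]]
  rw [← h2, Matrix.trace_diagonal]
  push_cast
  rfl

/-- For a density matrix `σ` on `ℂ^{d₁} ⊗ ℂ^{d₂}` with marginals
    `ρ₁ = tr₂ σ` and `ρ₂ = tr₁ σ`, we have `W(σ) ≥ W(ρ₁) + W(ρ₂)`, i.e.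
    `log₂(d₁ d₂) − S(σ) ≥ (log₂ d₁ − S(ρ₁)) + (log₂ d₂ − S(ρ₂))`: the accessible
    information `i(τ) = log₂ d − S(τ)` satisfies the hybrid monogamy relation
    `i(σ) ≥ i(ρ₁) + i(ρ₂)` (equivalently, subadditivity of the entropy). -/
theorem work_monogamy
    (d₁ d₂ : ℕ)
    (σ : Matrix (Fin d₁ × Fin d₂) (Fin d₁ × Fin d₂) ℂ)
    (hσ : σ.PosSemidef) (hσtr : σ.trace = 1)
    (ρ₁ : Matrix (Fin d₁) (Fin d₁) ℂ) (hρ₁ : ρ₁ = trSecond σ)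
    (ρ₂ : Matrix (Fin d₂) (Fin d₂) ℂ) (hρ₂ : ρ₂ = trFirst σ) :
    Real.logb 2 ((d₁ : ℝ) * d₂) - vnEntropy σ ≥
      (Real.logb 2 (d₁ : ℝ) - vnEntropy ρ₁) +
      (Real.logb 2 (d₂ : ℝ) - vnEntropy ρ₂) := by
  -- dimensions are positive
  rcases Nat.eq_zero_or_pos d₁ with h1 | h1
  · subst h1; simp [Matrix.trace] at hσtr
  rcases Nat.eq_zero_or_pos d₂ with h2 | h2
  · subst h2; simp [Matrix.trace] at hσtr
  -- setup
  have hρ₁psd : ρ₁.PosSemidef := hρ₁ ▸ trSecond_posSemidef hσ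
  have hρ₂psd : ρ₂.PosSemidef := hρ₂ ▸ trFirst_posSemidef hσ
  set lam := hσ.1.eigenvalues with hlam_def
  set p := hρ₁psd.1.eigenvalues with hp_def
  set q := hρ₂psd.1.eigenvalues with hq_def
  set U := (Matrix.IsHermitian.eigenvectorUnitary hσ.1 : Matrix (Fin d₁ × Fin d₂) (Fin d₁ × Fin d₂) ℂ) with hU_def
  set V := (Matrix.IsHermitian.eigenvectorUnitary hρ₁psd.1 : Matrix (Fin d₁) (Fin d₁) ℂ) with hV_def
  set W := (Matrix.IsHermitian.eigenvectorUnitary hρ₂psd.1 : Matrix (Fin d₂) (Fin d₂) ℂ) with hW_def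
  have hU2 : U * Uᴴ = 1 := by
    rw [← Matrix.star_eq_conjTranspose]
    exact (Matrix.mem_unitaryGroup_iff).mp (Matrix.IsHermitian.eigenvectorUnitary hσ.1).2
  have hV2 : V * Vᴴ = 1 := by
    rw [← Matrix.star_eq_conjTranspose]
    exact (Matrix.mem_unitaryGroup_iff).mp (Matrix.IsHermitian.eigenvectorUnitary hρ₁psd.1).2
  have hW2 : W * Wᴴ = 1 := by
    rw [← Matrix.star_eq_conjTranspose]
    exact (Matrix.mem_unitaryGroup_iff).mp (Matrix.IsHermitian.eigenvectorUnitary hρ₂psd.1).2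
  have hU1 : Uᴴ * U = 1 := by
    rw [← Matrix.star_eq_conjTranspose]
    exact (Matrix.mem_unitaryGroup_iff').mp (Matrix.IsHermitian.eigenvectorUnitary hσ.1).2
  have hV1 : Vᴴ * V = 1 := by
    rw [← Matrix.star_eq_conjTranspose]
    exact (Matrix.mem_unitaryGroup_iff').mp (Matrix.IsHermitian.eigenvectorUnitary hρ₁psd.1).2
  have hW1 : Wᴴ * W = 1 := by
    rw [← Matrix.star_eq_conjTranspose]
    exact (Matrix.mem_unitaryGroup_iff').mp (Matrix.IsHermitian.eigenvectorUnitary hρ₂psd.1).2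
  set Y := V ⊗ₖ W with hY_def
  have hYY : Yᴴ * Y = 1 := by
    rw [hY_def, kron_conjTranspose, ← Matrix.mul_kronecker_mul, hV1, hW1,
      Matrix.one_kronecker_one]
  have hYY' : Y * Yᴴ = 1 := by
    rw [hY_def, kron_conjTranspose, ← Matrix.mul_kronecker_mul, hV2, hW2,
      Matrix.one_kronecker_one]
  set M := Yᴴ * U with hM_def
  have hMM : M * Mᴴ = 1 := by
    rw [hM_def, Matrix.conjTranspose_mul, Matrix.conjTranspose_conjTranspose,
      show Yᴴ * U * (Uᴴ * Y) = Yᴴ * (U * Uᴴ) * Y from by simp only [mul_assoc], hU2,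
      mul_one, hYY]
  have hMM' : Mᴴ * M = 1 := by
    rw [hM_def, Matrix.conjTranspose_mul, Matrix.conjTranspose_conjTranspose,
      show Uᴴ * Y * (Yᴴ * U) = Uᴴ * (Y * Yᴴ) * U from by simp only [mul_assoc], hYY',
      mul_one, hU1]
  set T := Yᴴ * σ * Y with hT_def
  have hTM : T = M * Matrix.diagonal (RCLike.ofReal ∘ lam) * Mᴴ := by
    rw [hT_def, hM_def, Matrix.conjTranspose_mul, Matrix.conjTranspose_conjTranspose]
    conv_lhs => rw [hσ.1.spectral_theorem]
    rw [Unitary.conjStarAlgAut_apply, Matrix.star_eq_conjTranspose]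
    simp only [mul_assoc, hlam_def, hU_def]
  -- the mixed distribution
  set μ : Fin d₁ × Fin d₂ → ℝ := fun x => ∑ a, Complex.normSq (M x a) * lam a with hμ_def
  have hTdiag : ∀ x, T x x = (μ x : ℂ) := by
    intro x
    rw [hTM, hμ_def]
    rw [Matrix.mul_apply]
    push_cast
    refine Finset.sum_congr rfl fun a _ => ?_
    rw [Matrix.mul_diagonal, Matrix.conjTranspose_apply]
    rw [show M x a * (RCLike.ofReal ∘ lam) a * star (M x a)
        = (M x a * star (M x a)) * (lam a : ℂ) from by
      simp only [Function.comp_apply, RCLike.ofReal, Complex.coe_algebraMap]; ring]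
    rw [Complex.star_def, Complex.mul_conj]
  have hμnonneg : ∀ x, 0 ≤ μ x := fun x => Finset.sum_nonneg fun a _ =>
    mul_nonneg (Complex.normSq_nonneg _) (hσ.eigenvalues_nonneg a)
  have hrow : ∀ x, ∑ a, Complex.normSq (M x a) = 1 := by
    intro x
    have h := congrFun (congrFun hMM x) x
    rw [Matrix.mul_apply] at h
    simp only [Matrix.conjTranspose_apply, Matrix.one_apply_eq] at h
    have h2 : ((∑ a, Complex.normSq (M x a) : ℝ) : ℂ) = 1 := by
      push_cast
      rw [← h]
      exact Finset.sum_congr rfl fun a _ => by rw [Complex.star_def, Complex.mul_conj]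
    exact_mod_cast h2
  have hcol : ∀ a, ∑ x, Complex.normSq (M x a) = 1 := by
    intro a
    have h := congrFun (congrFun hMM' a) a
    rw [Matrix.mul_apply] at h
    simp only [Matrix.conjTranspose_apply, Matrix.one_apply_eq] at h
    have h2 : ((∑ x, Complex.normSq (M x a) : ℝ) : ℂ) = 1 := by
      push_cast
      rw [← h]
      refine Finset.sum_congr rfl fun x _ => ?_
      rw [Complex.star_def, mul_comm, Complex.mul_conj]
    exact_mod_cast h2
  have hlamnn : ∀ a, 0 ≤ lam a := fun a => hσ.eigenvalues_nonneg a
  have hp1 : ∑ i, p i = 1 := by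
    have htr1 : ρ₁.trace = 1 := by rw [hρ₁, trSecond_trace, hσtr]
    have h := sum_eigenvalues_eq hρ₁psd.1
    rw [htr1] at h
    exact_mod_cast h
  have hq1 : ∑ k, q k = 1 := by
    have htr2 : ρ₂.trace = 1 := by rw [hρ₂, trFirst_trace, hσtr]
    have h := sum_eigenvalues_eq hρ₂psd.1
    rw [htr2] at h
    exact_mod_cast h
  -- marginals
  have hts : trSecond T = Matrix.diagonal (RCLike.ofReal ∘ p) := by
    rw [hT_def, hY_def, trSecond_conj V W hW2 σ, ← hρ₁]
    have h := hρ₁psd.1.conjStarAlgAut_star_eigenvectorUnitary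
    rw [Unitary.conjStarAlgAut_star_apply] at h
    rw [Matrix.star_eq_conjTranspose] at h
    exact h
  have htf : trFirst T = Matrix.diagonal (RCLike.ofReal ∘ q) := by
    rw [hT_def, hY_def, trFirst_conj V W hV2 σ, ← hρ₂]
    have h := hρ₂psd.1.conjStarAlgAut_star_eigenvectorUnitary
    rw [Unitary.conjStarAlgAut_star_apply] at h
    rw [Matrix.star_eq_conjTranspose] at h
    exact h
  have hmarg1 : ∀ i, ∑ k, μ (i, k) = p i := by
    intro i
    have h := congrFun (congrFun hts i) i
    rw [Matrix.diagonal_apply_eq] at h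
    have h2 : ((∑ k, μ (i, k) : ℝ) : ℂ) = ((p i : ℝ) : ℂ) := by
      push_cast
      rw [show ((RCLike.ofReal ∘ p) i : ℂ) = (p i : ℂ) from rfl] at h
      rw [← h]
      exact Finset.sum_congr rfl fun k _ => (hTdiag (i, k)).symm
    exact_mod_cast h2
  have hmarg2 : ∀ k, ∑ i, μ (i, k) = q k := by
    intro k
    have h := congrFun (congrFun htf k) k
    rw [Matrix.diagonal_apply_eq] at h
    have h2 : ((∑ i, μ (i, k) : ℝ) : ℂ) = ((q k : ℝ) : ℂ) := by
      push_cast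
      rw [show ((RCLike.ofReal ∘ q) k : ℂ) = (q k : ℂ) from rfl] at h
      rw [← h]
      exact Finset.sum_congr rfl fun i _ => (hTdiag (i, k)).symm
    exact_mod_cast h2
  have hμtot : ∑ x, μ x = 1 := by
    rw [Fintype.sum_prod_type]
    calc ∑ i, ∑ k, μ (i, k) = ∑ i, p i :=
          Finset.sum_congr rfl fun i _ => hmarg1 i
      _ = 1 := hp1
  -- the two inequalities
  have ineq1 : ∑ a, Real.negMulLog (lam a) ≤ ∑ x, Real.negMulLog (μ x) :=
    jensen_ds (fun x a => Complex.normSq (M x a)) lam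
      (fun x a => Complex.normSq_nonneg _) hrow hcol hlamnn
  have ineq2 := classical_subadd μ hμnonneg hμtot
  have e1 : ∑ i, Real.negMulLog (∑ k, μ (i, k)) = ∑ i, Real.negMulLog (p i) :=
    Finset.sum_congr rfl fun i _ => by rw [hmarg1 i]
  have e2 : ∑ k, Real.negMulLog (∑ i, μ (i, k)) = ∑ k, Real.negMulLog (q k) :=
    Finset.sum_congr rfl fun k _ => by rw [hmarg2 k]
  rw [e1, e2] at ineq2
  -- entropies
  have hlog2 : (0 : ℝ) < Real.log 2 := Real.log_pos (by norm_num)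
  have hent : vnEntropy σ ≤ vnEntropy ρ₁ + vnEntropy ρ₂ := by
    rw [vnEntropy_eq hσ.1, vnEntropy_eq hρ₁psd.1, vnEntropy_eq hρ₂psd.1, ← add_div]
    exact div_le_div_of_nonneg_right (le_trans ineq1 ineq2) hlog2.le
  have hlogsplit : Real.logb 2 ((d₁ : ℝ) * d₂) = Real.logb 2 (d₁ : ℝ) + Real.logb 2 (d₂ : ℝ) :=
    Real.logb_mul (by exact_mod_cast h1.ne') (by exact_mod_cast h2.ne')
  rw [ge_iff_le, hlogsplit]
  linarith
end

section
/- Let |w₁⟩ = |0⟩, |w₂⟩ = (1/2)|0⟩ + (√3/2)|1⟩, |w₃⟩ = (1/2)|0⟩ − (√3/2)|1⟩ in ℂ², and let {|1⟩,|2⟩,|3⟩} be the standard basis of ℂ³. Then the three vectors |w_k⟩⊗|k⟩ ∈ ℂ²⊗ℂ³ (k = 1,2,3) are orthonormal, and consequently σ_RSP = (1/3)∑_{k=1}^3 (|w_k⟩⟨w_k| ⊗ |k⟩⟨k|) ⊗ (|w_k⟩⟨w_k| ⊗ |k⟩⟨k|) is a classical state on (ℂ²⊗ℂ³)⊗(ℂ²⊗ℂ³).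 -/
open Matrix Kronecker BigOperators ComplexOrder

/-- Orthogonal complements of the `w k` within `ℂ²`. -/
noncomputable def wp : Fin 3 → Fin 2 → ℂ := fun k =>
  if k = 0 then ![0, 1]
  else if k = 1 then ![((Real.sqrt 3 / 2 : ℝ) : ℂ), -(1/2)]
  else ![((Real.sqrt 3 / 2 : ℝ) : ℂ), 1/2]

/-- Dot product of simple tensors. -/
theorem tensor_dot (x y : Fin 2 → ℂ) (k l : Fin 3) :
    star (fun q : Fin 2 × Fin 3 => x q.1 * (if q.2 = k then 1 else 0)) ⬝ᵥ
      (fun q : Fin 2 × Fin 3 => y q.1 * (if q.2 = l then 1 else 0))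
    = if k = l then star x ⬝ᵥ y else 0 := by
  by_cases h : k = l <;>
  simp [dotProduct, Fintype.sum_prod_type, h, apply_ite, Finset.mul_sum,
    mul_comm, mul_assoc, mul_left_comm, eq_comm (a := l)]

/-- With `|w₁⟩ = |0⟩`, `|w₂⟩ = (1/2)|0⟩ + (√3/2)|1⟩`,
    `|w₃⟩ = (1/2)|0⟩ − (√3/2)|1⟩` in `ℂ²` and `{|1⟩,|2⟩,|3⟩}` the standard basis of
    `ℂ³`, the three vectors `|w_k⟩ ⊗ |k⟩ ∈ ℂ² ⊗ ℂ³` are orthonormal, and consequently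
    `σ_RSP = (1/3) ∑_k (|w_k⟩⟨w_k| ⊗ |k⟩⟨k|) ⊗ (|w_k⟩⟨w_k| ⊗ |k⟩⟨k|)` is a classical
    state on `(ℂ² ⊗ ℂ³) ⊗ (ℂ² ⊗ ℂ³)`. -/
theorem sigmaRSP_is_classical
    (w : Fin 3 → Fin 2 → ℂ)
    (hw0 : w 0 = ![1, 0])
    (hw1 : w 1 = ![1 / 2, ((Real.sqrt 3 / 2 : ℝ) : ℂ)])
    (hw2 : w 2 = ![1 / 2, -((Real.sqrt 3 / 2 : ℝ) : ℂ)])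
    (v : Fin 3 → (Fin 2 × Fin 3) → ℂ)
    (hv : v = fun k q => w k q.1 * (if q.2 = k then 1 else 0))
    (σRSP : Matrix ((Fin 2 × Fin 3) × (Fin 2 × Fin 3))
                   ((Fin 2 × Fin 3) × (Fin 2 × Fin 3)) ℂ)
    (hσ : σRSP = ((1 : ℂ) / 3) • ∑ k,
        vecMulVec (v k) (star (v k)) ⊗ₖ vecMulVec (v k) (star (v k))) :
    (∀ k l, star (v k) ⬝ᵥ v l = if k = l then (1 : ℂ) else 0) ∧
    IsClassicalState σRSP := by
  have hs : ((Real.sqrt 3 : ℝ) : ℂ) * ((Real.sqrt 3 : ℝ) : ℂ) = 3 := by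
    rw [← Complex.ofReal_mul, Real.mul_self_sqrt (by norm_num)]; norm_num
  -- two-dimensional inner-product facts
  have base : (∀ k, star (w k) ⬝ᵥ w k = 1) ∧ (∀ k, star (wp k) ⬝ᵥ wp k = 1) ∧
      (∀ k, star (w k) ⬝ᵥ wp k = 0) ∧ (∀ k, star (wp k) ⬝ᵥ w k = 0) := by
    refine ⟨?_, ?_, ?_, ?_⟩ <;> intro k <;> fin_cases k <;>
      simp [wp, dotProduct, Fin.sum_univ_two, hw0, hw1, hw2, Complex.ofReal_div,
        Complex.conj_ofReal, map_ofNat] <;>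
      first | linear_combination hs / 4 | linear_combination -hs / 4 | ring
  obtain ⟨hww, hpp, hwpd, hpwd⟩ := base
  -- the orthonormal family
  set α : (Fin 2 × Fin 3) → (Fin 2 × Fin 3) → ℂ :=
    fun a q => (if a.1 = 0 then w a.2 else wp a.2) q.1 * (if q.2 = a.2 then 1 else 0)
    with hα
  have hαo : ∀ a b, star (α a) ⬝ᵥ α b = if a = b then (1 : ℂ) else 0 := by
    rintro ⟨i, k⟩ ⟨j, l⟩
    have e1 : α (i, k) = fun q : Fin 2 × Fin 3 =>
        (if i = 0 then w k else wp k) q.1 * (if q.2 = k then 1 else 0) := rfl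
    have e2 : α (j, l) = fun q : Fin 2 × Fin 3 =>
        (if j = 0 then w l else wp l) q.1 * (if q.2 = l then 1 else 0) := rfl
    rw [e1, e2, tensor_dot]
    by_cases hkl : k = l
    · subst hkl
      fin_cases i <;> fin_cases j <;>
        simp [hww, hpp, hwpd, hpwd, Prod.ext_iff]
    · simp [hkl, Prod.ext_iff]
  have hvα : ∀ k, v k = α (0, k) := by
    intro k; rw [hv, hα]; funext q; simp
  refine ⟨fun k l => by rw [hvα, hvα]; rw [hαo]; simp [Prod.ext_iff], ?_⟩
  refine ⟨α, α, fun a b => if a.1 = 0 then (if b = a then 1/3 else 0) else 0,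
    hαo, hαo, ?_, ?_, ?_⟩
  · intro a b; dsimp only; split_ifs <;> norm_num
  · simp only [Finset.sum_ite_eq' Finset.univ, Finset.mem_univ, if_true]
    rw [Fintype.sum_prod_type]
    simp [Fin.sum_univ_two, Fin.sum_univ_three]
  · rw [hσ]
    have hcast : ∀ (a b : Fin 2 × Fin 3),
        (((if a.1 = 0 then (if b = a then (1:ℝ)/3 else 0) else 0) : ℝ) : ℂ)
        = if a.1 = 0 then (if b = a then (1:ℂ)/3 else 0) else 0 := by
      intro a b; split <;> [skip; norm_num]; split <;> norm_num
    simp only [hcast, ite_smul, zero_smul]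
    rw [Finset.smul_sum]
    rw [Fintype.sum_prod_type]
    simp only [Finset.sum_ite_eq' Finset.univ, Finset.mem_univ, if_true,
      Finset.sum_ite_irrel, Finset.sum_const_zero]
    exact Finset.sum_congr rfl fun k _ => by rw [hvα k]
end

section
/- Let |w₁⟩ = |0⟩, |w₂⟩ = (1/2)|0⟩ + (√3/2)|1⟩, |w₃⟩ = (1/2)|0⟩ − (√3/2)|1⟩ in ℂ², let {|1⟩,|2⟩,|3⟩} be the standard basis of ℂ³, and let σ_RSP = (1/3)∑_{k=1}^3 (|w_k⟩⟨w_k| ⊗ |k⟩⟨k|) ⊗ (|w_k⟩⟨w_k| ⊗ |k⟩⟨k|) on the 36-dimensional space (ℂ²⊗ℂ³)⊗(ℂ²⊗ℂ³). Then the von Neumann entropy of σ_RSP is S(σ_RSP) = log₂ 3, and hence the maximal extractable work from σ_RSP is W(σ_RSP) = log₂ 36 − log₂ 3 = log₂ 12. -/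
open Matrix Kronecker BigOperators ComplexOrder

lemma vecMulVec_mul_vecMulVec' {n : Type*} [Fintype n] (a b c d : n → ℂ) :
    vecMulVec a b * vecMulVec c d = (b ⬝ᵥ c) • vecMulVec a d := by
  ext i j
  simp only [mul_apply, vecMulVec_apply, Matrix.smul_apply, smul_eq_mul, dotProduct,
    Finset.sum_mul]
  exact Finset.sum_congr rfl fun x _ => by ring

/-- With `|w₁⟩ = |0⟩`, `|w₂⟩ = (1/2)|0⟩ + (√3/2)|1⟩`,
    `|w₃⟩ = (1/2)|0⟩ − (√3/2)|1⟩` in `ℂ²`, `{|1⟩,|2⟩,|3⟩}` the standard basis of `ℂ³`,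
    and `σ_RSP = (1/3) ∑_k (|w_k⟩⟨w_k| ⊗ |k⟩⟨k|) ⊗ (|w_k⟩⟨w_k| ⊗ |k⟩⟨k|)` on the
    36-dimensional space `(ℂ² ⊗ ℂ³) ⊗ (ℂ² ⊗ ℂ³)`, the von Neumann entropy is
    `S(σ_RSP) = log₂ 3`, hence the maximal extractable work is
    `W(σ_RSP) = log₂ 36 − log₂ 3 = log₂ 12`. -/
theorem sigmaRSP_entropy_and_work
    (w : Fin 3 → Fin 2 → ℂ)
    (hw0 : w 0 = ![1, 0])
    (hw1 : w 1 = ![1 / 2, ((Real.sqrt 3 / 2 : ℝ) : ℂ)])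
    (hw2 : w 2 = ![1 / 2, -((Real.sqrt 3 / 2 : ℝ) : ℂ)])
    (v : Fin 3 → (Fin 2 × Fin 3) → ℂ)
    (hv : v = fun k q => w k q.1 * (if q.2 = k then 1 else 0))
    (σRSP : Matrix ((Fin 2 × Fin 3) × (Fin 2 × Fin 3))
                   ((Fin 2 × Fin 3) × (Fin 2 × Fin 3)) ℂ)
    (hσ : σRSP = ((1 : ℂ) / 3) • ∑ k,
        vecMulVec (v k) (star (v k)) ⊗ₖ vecMulVec (v k) (star (v k))) :
    vnEntropy σRSP = Real.logb 2 3 ∧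
    Real.logb 2 36 - vnEntropy σRSP = Real.logb 2 12 := by
  have h3 : ((Real.sqrt 3 : ℝ) : ℂ) * ((Real.sqrt 3 : ℝ) : ℂ) = 3 := by
    rw [← Complex.ofReal_mul, Real.mul_self_sqrt (by norm_num)]
    norm_num
  have horth : ∀ k l : Fin 3, star (v k) ⬝ᵥ v l = if k = l then 1 else 0 := by
    subst hv
    intro k l
    fin_cases k <;> fin_cases l <;>
      simp [dotProduct, Fintype.sum_prod_type, Fin.sum_univ_succ, hw0, hw1, hw2,
        Complex.conj_ofReal, map_ofNat, div_mul_div_comm] <;>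
      rw [h3] <;> norm_num
  set P : Fin 3 → Matrix (Fin 2 × Fin 3) (Fin 2 × Fin 3) ℂ :=
    fun k => vecMulVec (v k) (star (v k)) with hP
  have hPmul : ∀ k l, P k * P l = if k = l then P k else 0 := by
    intro k l
    rw [hP]
    simp only [vecMulVec_mul_vecMulVec', horth k l]
    by_cases h : k = l
    · subst h; simp
    · simp [h]
  have hQ : ∀ k l : Fin 3, (P k ⊗ₖ P k) * (P l ⊗ₖ P l) =
      if k = l then P k ⊗ₖ P k else 0 := by
    intro k l
    rw [← Matrix.mul_kronecker_mul, hPmul]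
    by_cases h : k = l
    · simp [h]
    · simp [h]
  have hσ2 : σRSP * σRSP = ((1 : ℂ) / 3) • σRSP := by
    have expand : σRSP * σRSP
        = ((1:ℂ)/3) • ((1:ℂ)/3) • ∑ k, ∑ l, (P k ⊗ₖ P k) * (P l ⊗ₖ P l) := by
      rw [hσ, smul_mul_assoc, mul_smul_comm, Finset.sum_mul]
      congr 2
      exact Finset.sum_congr rfl fun k _ => Finset.mul_sum _ _ _
    rw [expand, hσ]
    congr 2
    rw [Finset.sum_congr rfl fun k _ => Finset.sum_congr rfl fun l _ => hQ k l]
    simp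
    rfl
  have hHerm : σRSP.IsHermitian := by
    rw [hσ]
    unfold Matrix.IsHermitian
    rw [conjTranspose_smul]
    congr 1
    · simp
    rw [conjTranspose_sum]
    apply Finset.sum_congr rfl
    intro k _
    ext ⟨a, b⟩ ⟨c, d⟩
    simp only [conjTranspose_apply, kroneckerMap_apply, vecMulVec_apply, Pi.star_apply,
      star_mul', star_star]
    ring
  have htr : Matrix.trace σRSP = 1 := by
    rw [hσ, trace_smul, trace_sum]
    have hQt : ∀ k : Fin 3, Matrix.trace (P k ⊗ₖ P k) = 1 := by
      intro k
      rw [trace_kronecker]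
      have hPt : Matrix.trace (P k) = 1 := by
        rw [hP]
        simp only [Matrix.trace, diag_apply, vecMulVec_apply]
        have h := horth k k
        rw [if_pos rfl] at h
        simp only [dotProduct, Pi.star_apply] at h
        rw [← h]
        exact Finset.sum_congr rfl fun i _ => by simp [Pi.star_apply, mul_comm]
      rw [hPt]; ring
    rw [Finset.sum_congr rfl fun k _ => hQt k]
    simp
  have heig : ∀ i, hHerm.eigenvalues i = 0 ∨ hHerm.eigenvalues i = 1 / 3 := by
    intro i
    set x := ⇑(hHerm.eigenvectorBasis i) with hx
    have hxe := hHerm.mulVec_eigenvectorBasis i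
    have hx0 : x ≠ 0 := by
      have hne := hHerm.eigenvectorBasis.orthonormal.ne_zero i
      intro h
      exact hne (by ext j; exact congrFun h j)
    set lam := hHerm.eigenvalues i with hlam
    obtain ⟨j, hj⟩ := Function.ne_iff.mp hx0
    simp only [Pi.zero_apply] at hj
    have e1 : (σRSP *ᵥ (σRSP *ᵥ x)) j = (lam:ℂ) * ((lam:ℂ) * x j) := by
      rw [hxe, mulVec_smul, hxe]
      simp only [Pi.smul_apply, Complex.real_smul]
      rfl
    have e2 : (σRSP *ᵥ (σRSP *ᵥ x)) j = ((1:ℂ)/3) * ((lam:ℂ) * x j) := by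
      rw [mulVec_mulVec, hσ2, smul_mulVec, hxe]
      simp only [Pi.smul_apply, Complex.real_smul, smul_eq_mul]
      rfl
    have h' : ((lam:ℂ) * lam) * x j = (((1:ℂ)/3) * lam) * x j := by
      linear_combination e1.symm.trans e2
    have hcc : (lam : ℂ) * lam = (1/3) * lam := mul_right_cancel₀ hj h'
    have hr : lam * lam = (1/3) * lam := by
      rw [show ((1:ℂ)/3) = ((1/3 : ℝ) : ℂ) by norm_num] at hcc
      exact_mod_cast hcc
    rcases mul_eq_mul_right_iff.mp hr with h | h
    · right; exact h
    · left; exact h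
  have hsum : ∑ i, hHerm.eigenvalues i = 1 := by
    have h1 : Matrix.trace σRSP = ∑ i, (hHerm.eigenvalues i : ℂ) := by
      conv_lhs => rw [hHerm.spectral_theorem]
      have hU : star (hHerm.eigenvectorUnitary :
            Matrix ((Fin 2 × Fin 3) × (Fin 2 × Fin 3)) ((Fin 2 × Fin 3) × (Fin 2 × Fin 3)) ℂ) *
          (hHerm.eigenvectorUnitary :
            Matrix ((Fin 2 × Fin 3) × (Fin 2 × Fin 3)) ((Fin 2 × Fin 3) × (Fin 2 × Fin 3)) ℂ) = 1 :=
        mem_unitaryGroup_iff'.mp hHerm.eigenvectorUnitary.2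
      rw [Unitary.conjStarAlgAut_apply, Matrix.trace_mul_cycle, hU, one_mul, trace_diagonal]
      simp
    rw [htr] at h1
    exact_mod_cast h1.symm
  have hlog : ∑ i, hHerm.eigenvalues i * Real.logb 2 (hHerm.eigenvalues i)
      = - Real.logb 2 3 := by
    have hterm : ∀ i, hHerm.eigenvalues i * Real.logb 2 (hHerm.eigenvalues i)
        = hHerm.eigenvalues i * Real.logb 2 (1/3) := by
      intro i; rcases heig i with h | h <;> rw [h] <;> norm_num
    rw [Finset.sum_congr rfl fun i _ => hterm i, ← Finset.sum_mul, hsum, one_mul,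
      one_div, Real.logb_inv]
  have hS : vnEntropy σRSP = Real.logb 2 3 := by
    rw [vnEntropy, dif_pos hHerm, hlog]
    ring
  refine ⟨hS, ?_⟩
  rw [hS]
  have h36 : Real.logb 2 36 = Real.logb 2 12 + Real.logb 2 3 := by
    rw [← Real.logb_mul (by norm_num) (by norm_num)]
    norm_num
  linarith
end
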